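/- If OABC is a tangential quadrilateral (i.e., a+c = b+d where a,b,c,d are the consecutive side lengths OA, AB, BC, CO) and the diagonal OB divides OABC into two triangles of equal area, then OABC is a kite (i.e., a = d and b = c). -/

import Mathlib

lemma key0 (s t h : ℝ) (hh : h ≠ 0)
    (heq : Real.sqrt (s^2+h^2) + Real.sqrt ((t-1)^2+h^2)
         = Real.sqrt ((s-1)^2+h^2) + Real.sqrt (t^2+h^2)) : s = t := by
  have h2 : 0 < h^2 := by positivity
  set a := Real.sqrt (s^2+h^2) with hadef
  set b := Real.sqrt ((s-1)^2+h^2) with hbdef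
  set c := Real.sqrt (t^2+h^2) with hcdef
  set d := Real.sqrt ((t-1)^2+h^2) with hddef
  have ha2 : a^2 = s^2+h^2 := Real.sq_sqrt (by positivity)
  have hb2 : b^2 = (s-1)^2+h^2 := Real.sq_sqrt (by positivity)
  have hc2 : c^2 = t^2+h^2 := Real.sq_sqrt (by positivity)
  have hd2 : d^2 = (t-1)^2+h^2 := Real.sq_sqrt (by positivity)
  have habs : |s| < a := by
    rw [hadef, ← Real.sqrt_sq_eq_abs]
    exact Real.sqrt_lt_sqrt (sq_nonneg s) (by linarith)
  have hbabs : |s-1| < b := by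
    rw [hbdef, ← Real.sqrt_sq_eq_abs]
    exact Real.sqrt_lt_sqrt (sq_nonneg _) (by linarith)
  have hcabs : |t| < c := by
    rw [hcdef, ← Real.sqrt_sq_eq_abs]
    exact Real.sqrt_lt_sqrt (sq_nonneg _) (by linarith)
  have hdabs : |t-1| < d := by
    rw [hddef, ← Real.sqrt_sq_eq_abs]
    exact Real.sqrt_lt_sqrt (sq_nonneg _) (by linarith)
  have ha1 : s < a := lt_of_le_of_lt (le_abs_self s) habs
  have ha1' : -s < a := lt_of_le_of_lt (neg_le_abs s) habs
  have hb1 : s - 1 < b := lt_of_le_of_lt (le_abs_self _) hbabs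
  have hb1' : -(s-1) < b := lt_of_le_of_lt (neg_le_abs _) hbabs
  have hc1 : t < c := lt_of_le_of_lt (le_abs_self _) hcabs
  have hc1' : -t < c := lt_of_le_of_lt (neg_le_abs _) hcabs
  have hd1 : t - 1 < d := lt_of_le_of_lt (le_abs_self _) hdabs
  have hd1' : -(t-1) < d := lt_of_le_of_lt (neg_le_abs _) hdabs
  have hapos : 0 < a := lt_of_le_of_lt (abs_nonneg s) habs
  have hbpos : 0 < b := lt_of_le_of_lt (abs_nonneg _) hbabs
  have hcpos : 0 < c := lt_of_le_of_lt (abs_nonneg _) hcabs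
  set e := a - b with hedef
  set f := a - c with hfdef
  have hcd : c - d = e := by rw [hedef]; linarith
  have hbd : b - d = f := by rw [hfdef]; linarith
  have hE1 : e*(a+b) = 2*s - 1 := by
    have : e*(a+b) = a^2 - b^2 := by rw [hedef]; ring
    rw [this, ha2, hb2]; ring
  have hE2 : e*(c+d) = 2*t - 1 := by
    have : e*(c+d) = c^2 - d^2 := by rw [← hcd]; ring
    rw [this, hc2, hd2]; ring
  have hF1 : f*(a+c) = (s-t)*(s+t) := by
    have : f*(a+c) = a^2 - c^2 := by rw [hfdef]; ring
    rw [this, ha2, hc2]; ring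
  have hF2 : f*(b+d) = (s-t)*(s+t-2) := by
    have : f*(b+d) = b^2 - d^2 := by rw [← hbd]; ring
    rw [this, hb2, hd2]; ring
  by_contra hst
  have hf0 : f ≠ 0 := by
    intro hf
    rw [hf, zero_mul] at hF1 hF2
    apply hst
    linear_combination (hF2 - hF1) / 2
  have hst2 : s - t = e * f := by
    have h3 : e*(a+b) - e*(c+d) = e*((a-c)+(b-d)) := by ring
    rw [hfdef] at hbd
    rw [hE1, hE2, ← hfdef, hbd] at h3
    linear_combination h3 / 2
  have hAC0 : f * (a + c - e*(s+t)) = 0 := by linear_combination hF1 + (s+t) * hst2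
  have hAC : a + c = e * (s+t) := by
    rcases mul_eq_zero.mp hAC0 with h' | h'
    · exact absurd h' hf0
    · linarith
  have he1 : e < 1 := by
    have h' : e * (a+b) < 1 * (a+b) := by rw [hE1, one_mul]; linarith
    exact lt_of_mul_lt_mul_right h' (by linarith)
  have he2 : -1 < e := by
    have h' : (-1) * (a+b) < e * (a+b) := by rw [hE1]; linarith
    exact lt_of_mul_lt_mul_right h' (by linarith)
  rcases lt_trichotomy (s+t) 0 with hS | hS | hS
  · have h' : e * (s+t) < (-1) * (s+t) := mul_lt_mul_of_neg_right he2 hS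
    linarith
  · have h' : a + c = 0 := by rw [hAC, hS, mul_zero]
    linarith
  · have h' : e * (s+t) < 1 * (s+t) := mul_lt_mul_of_pos_right he1 hS
    linarith

/-- Area of the triangle with vertices `P`, `Q`, `R` in the Euclidean plane. -/
noncomputable def triArea (P Q R : EuclideanSpace ℝ (Fin 2)) : ℝ :=
  |(Q 0 - P 0) * (R 1 - P 1) - (Q 1 - P 1) * (R 0 - P 0)| / 2

/-- If `OABC` is a tangential quadrilateral (`a + c = b + d`) and the diagonal `OB`
divides it into two triangles of equal area, then `OABC` is a kite (`a = d` and `b = c`). -/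
theorem stmt0 (O A B C : EuclideanSpace ℝ (Fin 2))
    (htang : dist O A + dist B C = dist A B + dist C O)
    (hndeg : ¬ Collinear ℝ ({O, A, B} : Set (EuclideanSpace ℝ (Fin 2))))
    (harea : triArea O A B = triArea O B C) :
    dist O A = dist C O ∧ dist A B = dist B C := by
  simp only [triArea] at harea
  have hOB : O ≠ B := by
    rintro rfl
    exact hndeg (by simpa [Set.insert_comm] using collinear_pair ℝ A O)
  set v0 : ℝ := B 0 - O 0 with hv0
  set v1 : ℝ := B 1 - O 1 with hv1
  have hLpos : 0 < v0^2 + v1^2 := by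
    have hd := dist_pos.mpr hOB
    rw [EuclideanSpace.dist_eq, Fin.sum_univ_two] at hd
    have h' := Real.sqrt_pos.mp hd
    rw [Real.dist_eq, Real.dist_eq, sq_abs, sq_abs] at h'
    rw [hv0, hv1]; nlinarith [h']
  have hL2 : (v0^2+v1^2) ≠ 0 := ne_of_gt hLpos
  have hcross : v0 * (A 1 - O 1) - v1 * (A 0 - O 0) ≠ 0 := by
    intro h0
    apply hndeg
    rw [collinear_iff_of_mem (Set.mem_insert O {A, B})]
    refine ⟨B - O, fun p hp => ?_⟩
    simp only [Set.mem_insert_iff, Set.mem_singleton_iff] at hp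
    rcases hp with rfl | rfl | rfl
    · exact ⟨0, by simp⟩
    · refine ⟨((p 0 - O 0)*v0 + (p 1 - O 1)*v1)/(v0^2+v1^2), ?_⟩
      ext i
      fin_cases i <;>
        simp only [vadd_eq_add, PiLp.add_apply, PiLp.smul_apply, PiLp.sub_apply,
          smul_eq_mul, Fin.zero_eta, Fin.mk_one] <;> field_simp
      · linear_combination (-(v1)) * h0
      · linear_combination v0 * h0
    · exact ⟨1, by simp⟩
  set L := Real.sqrt (v0^2+v1^2) with hLdef
  have hLgt : 0 < L := Real.sqrt_pos.mpr hLpos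
  set s := ((A 0 - O 0)*v0 + (A 1 - O 1)*v1)/(v0^2+v1^2) with hsdef
  set hA := (v0*(A 1 - O 1) - v1*(A 0 - O 0))/(v0^2+v1^2) with hAdef
  set t := ((C 0 - O 0)*v0 + (C 1 - O 1)*v1)/(v0^2+v1^2) with htdef
  set hC := (v0*(C 1 - O 1) - v1*(C 0 - O 0))/(v0^2+v1^2) with hCdef
  have hAne : hA ≠ 0 := div_ne_zero hcross hL2
  have hA0 : A 0 - O 0 = s*v0 - hA*v1 := by rw [hsdef, hAdef]; field_simp; ring
  have hA1 : A 1 - O 1 = s*v1 + hA*v0 := by rw [hsdef, hAdef]; field_simp; ring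
  have hC0 : C 0 - O 0 = t*v0 - hC*v1 := by rw [htdef, hCdef]; field_simp; ring
  have hC1 : C 1 - O 1 = t*v1 + hC*v0 := by rw [htdef, hCdef]; field_simp; ring
  have dOA : dist O A = L * Real.sqrt (s^2 + hA^2) := by
    rw [EuclideanSpace.dist_eq, Fin.sum_univ_two, Real.dist_eq, Real.dist_eq, sq_abs, sq_abs]
    have he : (O 0 - A 0)^2 + (O 1 - A 1)^2 = (v0^2+v1^2) * (s^2+hA^2) := by
      have e0 : O 0 - A 0 = -(s*v0 - hA*v1) := by linarith [hA0]
      have e1 : O 1 - A 1 = -(s*v1 + hA*v0) := by linarith [hA1]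
      rw [e0, e1]; ring
    rw [he, Real.sqrt_mul hLpos.le]
  have dAB : dist A B = L * Real.sqrt ((s-1)^2 + hA^2) := by
    rw [EuclideanSpace.dist_eq, Fin.sum_univ_two, Real.dist_eq, Real.dist_eq, sq_abs, sq_abs]
    have he : (A 0 - B 0)^2 + (A 1 - B 1)^2 = (v0^2+v1^2) * ((s-1)^2+hA^2) := by
      have e0 : A 0 - B 0 = (s-1)*v0 - hA*v1 := by
        have : (s-1)*v0 - hA*v1 = (s*v0 - hA*v1) - v0 := by ring
        rw [this, ← hA0, hv0]; ring
      have e1 : A 1 - B 1 = (s-1)*v1 + hA*v0 := by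
        have : (s-1)*v1 + hA*v0 = (s*v1 + hA*v0) - v1 := by ring
        rw [this, ← hA1, hv1]; ring
      rw [e0, e1]; ring
    rw [he, Real.sqrt_mul hLpos.le]
  have dCO : dist C O = L * Real.sqrt (t^2 + hC^2) := by
    rw [EuclideanSpace.dist_eq, Fin.sum_univ_two, Real.dist_eq, Real.dist_eq, sq_abs, sq_abs]
    have he : (C 0 - O 0)^2 + (C 1 - O 1)^2 = (v0^2+v1^2) * (t^2+hC^2) := by
      rw [hC0, hC1]; ring
    rw [he, Real.sqrt_mul hLpos.le]
  have dBC : dist B C = L * Real.sqrt ((t-1)^2 + hC^2) := by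
    rw [EuclideanSpace.dist_eq, Fin.sum_univ_two, Real.dist_eq, Real.dist_eq, sq_abs, sq_abs]
    have he : (B 0 - C 0)^2 + (B 1 - C 1)^2 = (v0^2+v1^2) * ((t-1)^2+hC^2) := by
      have e0 : B 0 - C 0 = -((t-1)*v0 - hC*v1) := by
        have : (t-1)*v0 - hC*v1 = (t*v0 - hC*v1) - v0 := by ring
        rw [this, ← hC0, hv0]; ring
      have e1 : B 1 - C 1 = -((t-1)*v1 + hC*v0) := by
        have : (t-1)*v1 + hC*v0 = (t*v1 + hC*v0) - v1 := by ring
        rw [this, ← hC1, hv1]; ring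
      rw [e0, e1]; ring
    rw [he, Real.sqrt_mul hLpos.le]
  -- equal areas give hC^2 = hA^2
  have hXA : (A 0 - O 0)*(B 1 - O 1) - (A 1 - O 1)*(B 0 - O 0) = -(hA*(v0^2+v1^2)) := by
    rw [hAdef, ← hv0, ← hv1]; field_simp; ring
  have hXC : (B 0 - O 0)*(C 1 - O 1) - (B 1 - O 1)*(C 0 - O 0) = hC*(v0^2+v1^2) := by
    rw [hCdef, ← hv0, ← hv1]; field_simp
  rw [hXA, hXC, abs_neg, abs_mul, abs_mul, abs_of_pos hLpos] at harea
  have habs : |hA| = |hC| := mul_right_cancel₀ hL2 (by linear_combination 2*harea)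
  have hk2 : hC^2 = hA^2 := by rw [← sq_abs, ← sq_abs hA, habs]
  rw [dOA, dBC, dAB, dCO] at htang
  have heq : Real.sqrt (s^2+hA^2) + Real.sqrt ((t-1)^2+hC^2)
      = Real.sqrt ((s-1)^2+hA^2) + Real.sqrt (t^2+hC^2) := by
    apply mul_left_cancel₀ (ne_of_gt hLgt)
    rw [mul_add, mul_add]; linarith
  rw [hk2] at heq
  have hst : s = t := key0 s t hA hAne heq
  constructor
  · rw [dOA, dCO, hst, hk2]
  · rw [dAB, dBC, hst, hk2]
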